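/- arXiv:1709.00582 — 4 statements merged into one kernel-verified Lean document; each statement's English description precedes it below -/
import Mathlib

section
/- Radon–Nikodym derivative of the FK measure with field with respect to the one without field (finite-graph version of Proposition 3.1 and of Proposition A in the Appendix): for every internal configuration ω̃ ∈ {0,1}^E, P̃_{J,H}(ω̃) = P̃_{J,0}(ω̃) · ( ∏_{C a cluster of ω̃} cosh(H(C)) ) / E_{P̃_{J,0}}[ ∏_{C a cluster of ·} cosh(H(C)) ]. -/
open scoped Classical

namespace FK

variable {V : Type*} [Fintype V] [DecidableEq V]

/-- Internal bond configurations on the edge set `E`. -/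
abbrev Config (E : Finset (Sym2 V)) : Type _ := {e : Sym2 V // e ∈ E} → Bool

/-- Full bond configurations: internal edges together with the ghost edges
(one for each vertex). -/
abbrev GConfig (E : Finset (Sym2 V)) : Type _ := Config E × (V → Bool)

/-- Two vertices are adjacent if they are distinct and joined by an open internal edge. -/
def adj (E : Finset (Sym2 V)) (ω : Config E) (u v : V) : Prop :=
  u ≠ v ∧ ∃ h : s(u, v) ∈ E, ω ⟨s(u, v), h⟩ = true

/-- The same-cluster relation of an internal configuration. -/
def conn (E : Finset (Sym2 V)) (ω : Config E) (u v : V) : Prop :=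
  Relation.ReflTransGen (adj E ω) u v

/-- The cluster of a vertex. -/
noncomputable def cluster (E : Finset (Sym2 V)) (ω : Config E) (v : V) : Finset V :=
  Finset.univ.filter (fun u => conn E ω v u)

/-- The set of clusters (connected components) of an internal configuration. -/
noncomputable def clusters (E : Finset (Sym2 V)) (ω : Config E) : Finset (Finset V) :=
  Finset.univ.image (cluster E ω)

/-- Adjacency in the extended graph, where `none` is the ghost vertex `g`. -/
def adjG (E : Finset (Sym2 V)) (ω : GConfig E) : Option V → Option V → Prop
  | some u, some v => adj E ω.1 u v
  | some u, none => ω.2 u = true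
  | none, some v => ω.2 v = true
  | none, none => False

/-- Connectivity in the extended graph (with the ghost vertex `none`). -/
def connG (E : Finset (Sym2 V)) (ω : GConfig E) (x y : Option V) : Prop :=
  Relation.ReflTransGen (adjG E ω) x y

/-- Number of connected components of the extended graph not containing the ghost. -/
noncomputable def kGhost (E : Finset (Sym2 V)) (ω : GConfig E) : ℕ :=
  (((Finset.univ : Finset V).filter (fun v => ¬ connG E ω (some v) none)).image
    (fun v => Finset.univ.filter (fun u : V => connG E ω (some v) (some u)))).card

/-- The product over internal edges of the usual FK edge weights. -/
noncomputable def edgeWeight (J : Sym2 V → ℝ) (E : Finset (Sym2 V)) (ω : Config E) : ℝ :=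
  ∏ e : {e : Sym2 V // e ∈ E},
    if ω e then 1 - Real.exp (-2 * J e.1) else Real.exp (-2 * J e.1)

/-- Unnormalized FK (q = 2) weight with ghost. -/
noncomputable def fkWeight (J : Sym2 V → ℝ) (H : V → ℝ) (E : Finset (Sym2 V))
    (ω : GConfig E) : ℝ :=
  2 ^ kGhost E ω * edgeWeight J E ω.1 *
    ∏ v, if ω.2 v then 1 - Real.exp (-2 * H v) else Real.exp (-2 * H v)

/-- The FK (q = 2) random-cluster measure with ghost. -/
noncomputable def fkProb (J : Sym2 V → ℝ) (H : V → ℝ) (E : Finset (Sym2 V))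
    (ω : GConfig E) : ℝ :=
  fkWeight J H E ω / ∑ ω' : GConfig E, fkWeight J H E ω'

/-- The marginal of the FK measure with ghost on the internal edges. -/
noncomputable def fkMarginal (J : Sym2 V → ℝ) (H : V → ℝ) (E : Finset (Sym2 V))
    (ωi : Config E) : ℝ :=
  ∑ ωg : V → Bool, fkProb J H E (ωi, ωg)

/-- Unnormalized zero-field random-cluster (q = 2) weight. -/
noncomputable def rcWeight (J : Sym2 V → ℝ) (E : Finset (Sym2 V)) (ω : Config E) : ℝ :=
  2 ^ (clusters E ω).card * edgeWeight J E ω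

/-- The zero-field random-cluster (q = 2) measure. -/
noncomputable def rcProb (J : Sym2 V → ℝ) (E : Finset (Sym2 V)) (ω : Config E) : ℝ :=
  rcWeight J E ω / ∑ ω' : Config E, rcWeight J E ω'

/-- The spin value (±1) of a Boolean. -/
def spin (b : Bool) : ℝ := if b then 1 else -1

/-- The product of the two spins at the endpoints of an (unordered) edge. -/
def pairSpin (σ : V → Bool) : Sym2 V → ℝ :=
  Sym2.lift ⟨fun u v => spin (σ u) * spin (σ v), fun u v => mul_comm _ _⟩

/-- Unnormalized Ising weight. -/
noncomputable def isingWeight (J : Sym2 V → ℝ) (H : V → ℝ) (E : Finset (Sym2 V))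
    (σ : V → Bool) : ℝ :=
  Real.exp ((∑ e ∈ E, J e * pairSpin σ e) + ∑ v, H v * spin (σ v))

/-- The Ising Gibbs measure. -/
noncomputable def isingProb (J : Sym2 V → ℝ) (H : V → ℝ) (E : Finset (Sym2 V))
    (σ : V → Bool) : ℝ :=
  isingWeight J H E σ / ∑ σ' : V → Bool, isingWeight J H E σ'

/-- Unnormalized Edwards–Sokal weight on pairs (spin configuration, bond configuration
with ghost); the ghost spin is `+1` (i.e. `true`). -/
noncomputable def esWeight (J : Sym2 V → ℝ) (H : V → ℝ) (E : Finset (Sym2 V))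
    (p : (V → Bool) × GConfig E) : ℝ :=
  (∏ e : {e : Sym2 V // e ∈ E},
      if p.2.1 e then
        (if ∀ u ∈ e.1, ∀ v ∈ e.1, p.1 u = p.1 v then 1 - Real.exp (-2 * J e.1) else 0)
      else Real.exp (-2 * J e.1))
  * ∏ v, if p.2.2 v then (if p.1 v = true then 1 - Real.exp (-2 * H v) else 0)
         else Real.exp (-2 * H v)

/-- The Edwards–Sokal coupling measure. -/
noncomputable def esProb (J : Sym2 V → ℝ) (H : V → ℝ) (E : Finset (Sym2 V))
    (p : (V → Bool) × GConfig E) : ℝ :=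
  esWeight J H E p / ∑ p' : (V → Bool) × GConfig E, esWeight J H E p'

end FK

namespace FK

variable {V : Type*} [Fintype V] [DecidableEq V]

lemma adj_symm (E : Finset (Sym2 V)) (ω : Config E) : Symmetric (adj E ω) := by
  rintro u v ⟨hne, hmem, hω⟩
  refine ⟨hne.symm, ?_⟩
  rw [Sym2.eq_swap]
  exact ⟨hmem, hω⟩

lemma conn_symm {E : Finset (Sym2 V)} {ω : Config E} {u v : V} (h : conn E ω u v) :
    conn E ω v u := (@Relation.ReflTransGen.stdSymm _ _ ⟨fun a b hab => adj_symm E ω hab⟩).symm _ _ h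

lemma mem_cluster {E : Finset (Sym2 V)} {ω : Config E} {u v : V} :
    u ∈ cluster E ω v ↔ conn E ω v u := by simp [cluster]

lemma self_mem_cluster {E : Finset (Sym2 V)} {ω : Config E} (v : V) :
    v ∈ cluster E ω v := mem_cluster.mpr Relation.ReflTransGen.refl

lemma cluster_eq_of_conn {E : Finset (Sym2 V)} {ω : Config E} {u v : V}
    (h : conn E ω u v) : cluster E ω u = cluster E ω v := by
  ext w
  simp only [mem_cluster]
  exact ⟨fun h' => (conn_symm h).trans h', fun h' => h.trans h'⟩

lemma pairwiseDisjoint_clusters (E : Finset (Sym2 V)) (ω : Config E) :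
    (↑(clusters E ω) : Set (Finset V)).PairwiseDisjoint id := by
  intro C hC D hD hne
  simp only [clusters, Finset.coe_image, Set.mem_image] at hC hD
  obtain ⟨v, -, rfl⟩ := hC
  obtain ⟨u, -, rfl⟩ := hD
  simp only [Function.onFun, id]
  rw [Finset.disjoint_left]
  intro w hw hw'
  exact hne (by
    rw [cluster_eq_of_conn (mem_cluster.mp hw), cluster_eq_of_conn (mem_cluster.mp hw')])

lemma biUnion_clusters (E : Finset (Sym2 V)) (ω : Config E) :
    (clusters E ω).biUnion id = Finset.univ := by
  ext v
  simp only [Finset.mem_biUnion, Finset.mem_univ, iff_true, id]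
  exact ⟨cluster E ω v, Finset.mem_image_of_mem _ (Finset.mem_univ v), self_mem_cluster v⟩

lemma conn_to_connG {E : Finset (Sym2 V)} {ω : GConfig E} {u v : V}
    (h : conn E ω.1 u v) : connG E ω (some u) (some v) :=
  Relation.ReflTransGen.lift some (fun _ _ hab => hab) _ _ h

lemma connG_aux {E : Finset (Sym2 V)} {ω : GConfig E} {v : V} {y : Option V}
    (h : connG E ω (some v) y) :
    (y = none → ∃ u, conn E ω.1 v u ∧ ω.2 u = true) ∧
    (∀ u, y = some u → conn E ω.1 v u ∨ ∃ w, conn E ω.1 v w ∧ ω.2 w = true) := by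
  induction h with
  | refl =>
    constructor
    · intro h; exact nomatch h
    · intro u hu
      obtain rfl : v = u := by injection hu
      exact Or.inl Relation.ReflTransGen.refl
  | @tail b c hab hbc ih =>
    match b, c, hbc with
    | some w, none, hbc =>
      constructor
      · intro _
        rcases ih.2 w rfl with h1 | h1
        · exact ⟨w, h1, hbc⟩
        · exact h1
      · intro u hu; exact nomatch hu
    | some w, some u, hbc =>
      constructor
      · intro h; exact nomatch h
      · intro u' hu'
        obtain rfl : u = u' := by injection hu'
        rcases ih.2 w rfl with h1 | h1
        · exact Or.inl (h1.tail hbc)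
        · exact Or.inr h1
    | none, some u, hbc =>
      constructor
      · intro h; exact nomatch h
      · intro u' hu'
        exact Or.inr (ih.1 rfl)

lemma connG_none {E : Finset (Sym2 V)} {ω : GConfig E} {v : V} :
    connG E ω (some v) none ↔ ∃ u, conn E ω.1 v u ∧ ω.2 u = true := by
  constructor
  · intro h; exact (connG_aux h).1 rfl
  · rintro ⟨u, hc, hg⟩
    exact (conn_to_connG hc).tail hg

lemma connG_some {E : Finset (Sym2 V)} {ω : GConfig E} {v u : V}
    (hng : ¬ connG E ω (some v) none) :
    connG E ω (some v) (some u) ↔ conn E ω.1 v u := by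
  constructor
  · intro h
    rcases (connG_aux h).2 u rfl with h1 | ⟨w, hc, hg⟩
    · exact h1
    · exact absurd (connG_none.mpr ⟨w, hc, hg⟩) hng
  · exact conn_to_connG

lemma kGhost_eq (E : Finset (Sym2 V)) (ωi : Config E) (ωg : V → Bool) :
    kGhost E (ωi, ωg) =
      ((clusters E ωi).filter (fun C => ∀ v ∈ C, ωg v = false)).card := by
  have hcond : ∀ v : V, (¬ connG E (ωi, ωg) (some v) none) ↔
      ∀ u ∈ cluster E ωi v, ωg u = false := by
    intro v
    rw [connG_none]
    simp only [mem_cluster, not_exists, not_and, Bool.not_eq_true]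
  unfold kGhost
  congr 1
  ext C
  simp only [Finset.mem_image, Finset.mem_filter, Finset.mem_univ, true_and]
  constructor
  · rintro ⟨v, hv, rfl⟩
    have hset : (Finset.univ.filter (fun u : V => connG E (ωi, ωg) (some v) (some u)))
        = cluster E ωi v := by
      ext u
      simp only [Finset.mem_filter, Finset.mem_univ, true_and, mem_cluster]
      exact connG_some hv
    rw [hset]
    exact ⟨Finset.mem_image_of_mem _ (Finset.mem_univ v), (hcond v).mp hv⟩
  · rintro ⟨hC, hall⟩
    obtain ⟨v, -, rfl⟩ := Finset.mem_image.mp hC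
    have hv : ¬ connG E (ωi, ωg) (some v) none := (hcond v).mpr hall
    refine ⟨v, hv, ?_⟩
    ext u
    simp only [Finset.mem_filter, Finset.mem_univ, true_and, mem_cluster]
    exact connG_some hv

lemma sum_bool_fun (f : V → Bool → ℝ) :
    ∑ ωg : V → Bool, ∏ v, f v (ωg v) = ∏ v, (f v true + f v false) := by
  have h := Finset.prod_univ_sum (fun _ : V => (Finset.univ : Finset Bool)) f
  rw [Fintype.piFinset_univ] at h
  rw [← h]
  refine Finset.prod_congr rfl fun v _ => ?_
  simp [Fintype.sum_bool]

lemma cosh_aux (h : ℝ) : Real.exp (-(2 * h)) + 1 = 2 * Real.exp (-h) * Real.cosh h := by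
  have h1 : Real.exp (-h) * Real.exp h = 1 := by
    rw [← Real.exp_add]; simp
  have h2 : Real.exp (-h) * Real.exp (-h) = Real.exp (-(2 * h)) := by
    rw [← Real.exp_add]; ring_nf
  rw [Real.cosh_eq]
  field_simp
  linarith [h1, h2]

lemma ghost_sum (J : Sym2 V → ℝ) (H : V → ℝ) (E : Finset (Sym2 V)) (ωi : Config E) :
    ∑ ωg : V → Bool, fkWeight J H E (ωi, ωg) =
      rcWeight J E ωi * Real.exp (-∑ v, H v) *
        ∏ C ∈ clusters E ωi, Real.cosh (∑ v ∈ C, H v) := by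
  classical
  set P := clusters E ωi with hP
  set W : (V → Bool) → ℝ :=
    fun ωg => ∏ v, (if ωg v then 1 - Real.exp (-2 * H v) else Real.exp (-2 * H v)) with hW
  have key : ∀ ωg : V → Bool, fkWeight J H E (ωi, ωg) =
      edgeWeight J E ωi *
        ((2:ℝ) ^ ((P.filter (fun C => ∀ v ∈ C, ωg v = false)).card) * W ωg) := by
    intro ωg
    unfold fkWeight
    rw [kGhost_eq]
    ring
  simp only [key]
  rw [← Finset.mul_sum]
  -- expand the power of two
  have step1 : ∀ ωg : V → Bool,
      (2:ℝ) ^ ((P.filter (fun C => ∀ v ∈ C, ωg v = false)).card) =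
        ∑ S ∈ P.powerset, ∏ C ∈ S, (if (∀ v ∈ C, ωg v = false) then (1:ℝ) else 0) := by
    intro ωg
    have h1 : ∏ C ∈ P, ((if (∀ v ∈ C, ωg v = false) then (1:ℝ) else 0) + 1) =
        ∑ S ∈ P.powerset, ∏ C ∈ S, (if (∀ v ∈ C, ωg v = false) then (1:ℝ) else 0) := by
      rw [Finset.prod_add]
      simp
    rw [← h1]
    have h2 : ∏ C ∈ P, ((if (∀ v ∈ C, ωg v = false) then (1:ℝ) else 0) + 1) =
        ∏ C ∈ P, (if (∀ v ∈ C, ωg v = false) then (2:ℝ) else 1) := by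
      refine Finset.prod_congr rfl fun C _ => ?_
      split <;> norm_num
    rw [h2, Finset.prod_ite (fun _ => (2:ℝ)) (fun _ => (1:ℝ)), Finset.prod_const,
      Finset.prod_const_one, mul_one]
  simp only [step1, Finset.sum_mul]
  rw [Finset.sum_comm]
  -- compute the inner sum for each subset S of clusters
  have inner : ∀ S ∈ P.powerset,
      (∑ ωg : V → Bool,
        (∏ C ∈ S, (if (∀ v ∈ C, ωg v = false) then (1:ℝ) else 0)) * W ωg) =
      ∏ C ∈ S, Real.exp (-(2 * ∑ v ∈ C, H v)) := by
    intro S hS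
    have hSsub : S ⊆ P := Finset.mem_powerset.mp hS
    set U : Finset V := S.biUnion id with hU
    have hcond : ∀ ωg : V → Bool,
        (∏ C ∈ S, (if (∀ v ∈ C, ωg v = false) then (1:ℝ) else 0)) =
        ∏ v, (if v ∈ U then (if ωg v = false then (1:ℝ) else 0) else 1) := by
      intro ωg
      rw [Finset.prod_boole]
      rw [Finset.prod_ite_mem, Finset.univ_inter, Finset.prod_boole]
      congr 1
      simp only [eq_iff_iff]
      constructor
      · intro h v hv
        obtain ⟨C, hC, hvC⟩ := Finset.mem_biUnion.mp hv
        exact h C hC v hvC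
      · intro h C hC v hv
        exact h v (Finset.mem_biUnion.mpr ⟨C, hC, hv⟩)
    have hprod : ∀ ωg : V → Bool,
        (∏ C ∈ S, (if (∀ v ∈ C, ωg v = false) then (1:ℝ) else 0)) * W ωg =
        ∏ v, ((if v ∈ U then (if ωg v = false then (1:ℝ) else 0) else 1) *
          (if ωg v then 1 - Real.exp (-2 * H v) else Real.exp (-2 * H v))) := by
      intro ωg
      rw [hcond, hW, ← Finset.prod_mul_distrib]
    simp only [hprod]
    rw [sum_bool_fun (fun v b => (if v ∈ U then (if b = false then (1:ℝ) else 0) else 1) *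
      (if b then 1 - Real.exp (-2 * H v) else Real.exp (-2 * H v)))]
    trans (∏ v : V, (if v ∈ U then Real.exp (-2 * H v) else 1))
    · refine Finset.prod_congr rfl fun v _ => ?_
      by_cases hv : v ∈ U
      · simp [hv]
      · simp [hv]
    rw [Finset.prod_ite_mem, Finset.univ_inter]
    rw [← Real.exp_sum]
    have hsum : ∑ v ∈ U, (-2 * H v) = ∑ C ∈ S, (-(2 * ∑ v ∈ C, H v)) := by
      rw [hU, Finset.sum_biUnion ((pairwiseDisjoint_clusters E ωi).subset
        (by exact_mod_cast hSsub))]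
      refine Finset.sum_congr rfl fun C _ => ?_
      rw [Finset.mul_sum, ← Finset.sum_neg_distrib]
      exact Finset.sum_congr rfl fun v _ => by ring
    rw [hsum, Real.exp_sum]
  rw [Finset.sum_congr rfl inner]
  -- resum over the powerset
  have resum : ∑ S ∈ P.powerset, ∏ C ∈ S, Real.exp (-(2 * ∑ v ∈ C, H v)) =
      ∏ C ∈ P, (Real.exp (-(2 * ∑ v ∈ C, H v)) + 1) := by
    rw [Finset.prod_add]
    simp
  rw [resum]
  have final : ∏ C ∈ P, (Real.exp (-(2 * ∑ v ∈ C, H v)) + 1) =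
      2 ^ P.card * Real.exp (-∑ v, H v) * ∏ C ∈ P, Real.cosh (∑ v ∈ C, H v) := by
    have h1 : ∀ C ∈ P, Real.exp (-(2 * ∑ v ∈ C, H v)) + 1 =
        2 * Real.exp (-(∑ v ∈ C, H v)) * Real.cosh (∑ v ∈ C, H v) :=
      fun C _ => cosh_aux _
    rw [Finset.prod_congr rfl h1]
    rw [Finset.prod_mul_distrib, Finset.prod_mul_distrib, Finset.prod_const]
    rw [← Real.exp_sum]
    congr 2
    rw [← Finset.sum_neg_distrib]
    congr 1
    conv_rhs => rw [← biUnion_clusters E ωi]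
    rw [Finset.sum_biUnion (pairwiseDisjoint_clusters E ωi)]
    refine Finset.sum_congr rfl fun C _ => ?_
    simp [id]
  rw [final]
  unfold rcWeight
  ring

theorem fk_radon_nikodym' (E : Finset (Sym2 V))
    (J : Sym2 V → ℝ) (hJ : ∀ e ∈ E, 0 ≤ J e) (H : V → ℝ) :
    ∀ ωi : Config E,
      fkMarginal J H E ωi =
        rcProb J E ωi * (∏ C ∈ clusters E ωi, Real.cosh (∑ v ∈ C, H v)) /
          ∑ ω' : Config E, rcProb J E ω' *
            ∏ C ∈ clusters E ω', Real.cosh (∑ v ∈ C, H v) := by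
  classical
  intro ωi
  set G : Config E → ℝ := fun ω => ∏ C ∈ clusters E ω, Real.cosh (∑ v ∈ C, H v) with hG
  have hGpos : ∀ ω, 0 < G ω := fun ω => Finset.prod_pos fun C _ => Real.cosh_pos _
  have hanneg : ∀ ω : Config E, 0 ≤ rcWeight J E ω := by
    intro ω
    refine mul_nonneg (by positivity) (Finset.prod_nonneg fun e _ => ?_)
    split
    · have h1 : Real.exp (-2 * J e.1) ≤ 1 :=
        Real.exp_le_one_iff.mpr (by nlinarith [hJ e.1 e.2])
      linarith
    · exact (Real.exp_pos _).le
  have hpos0 : 0 < rcWeight J E (fun _ => false) := by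
    refine mul_pos (by positivity) (Finset.prod_pos fun e _ => ?_)
    simp only [Bool.false_eq_true, if_false]
    exact Real.exp_pos _
  have hD : 0 < ∑ ω' : Config E, rcWeight J E ω' * G ω' :=
    Finset.sum_pos' (fun i _ => mul_nonneg (hanneg i) (hGpos i).le)
      ⟨fun _ => false, Finset.mem_univ _, mul_pos hpos0 (hGpos _)⟩
  have hZ : 0 < ∑ ω' : Config E, rcWeight J E ω' :=
    Finset.sum_pos' (fun i _ => hanneg i) ⟨fun _ => false, Finset.mem_univ _, hpos0⟩
  have hc : (0:ℝ) < Real.exp (-∑ v, H v) := Real.exp_pos _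
  have hZtot : (∑ p : GConfig E, fkWeight J H E p) =
      Real.exp (-∑ v, H v) * ∑ ω' : Config E, rcWeight J E ω' * G ω' := by
    rw [Fintype.sum_prod_type, Finset.mul_sum]
    refine Finset.sum_congr rfl fun ωi' _ => ?_
    rw [ghost_sum]
    ring
  have hL : fkMarginal J H E ωi =
      rcWeight J E ωi * G ωi / ∑ ω' : Config E, rcWeight J E ω' * G ω' := by
    unfold fkMarginal fkProb
    rw [← Finset.sum_div, ghost_sum, hZtot]
    rw [show rcWeight J E ωi * Real.exp (-∑ v, H v) * G ωi =
      Real.exp (-∑ v, H v) * (rcWeight J E ωi * G ωi) from by ring]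
    exact mul_div_mul_left _ _ hc.ne'
  rw [hL]
  unfold rcProb
  simp_rw [div_mul_eq_mul_div]
  rw [← Finset.sum_div]
  rw [div_div_div_cancel_right₀]
  exact hZ.ne'

end FK

/-- Radon–Nikodym derivative of the FK measure with field
with respect to the one without field. -/
theorem fk_radon_nikodym
    {V : Type*} [Fintype V] [DecidableEq V]
    (E : Finset (Sym2 V)) (hE : ∀ e ∈ E, ¬ e.IsDiag)
    (J : Sym2 V → ℝ) (hJ : ∀ e ∈ E, 0 ≤ J e)
    (H : V → ℝ) (hH : ∀ v, 0 ≤ H v) :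
    ∀ ωi : FK.Config E,
      FK.fkMarginal J H E ωi =
        FK.rcProb J E ωi *
          (∏ C ∈ FK.clusters E ωi, Real.cosh (∑ v ∈ C, H v)) /
          ∑ ω' : FK.Config E, FK.rcProb J E ω' *
            ∏ C ∈ FK.clusters E ω', Real.cosh (∑ v ∈ C, H v) := by
  exact fun ωi => FK.fk_radon_nikodym' E J hJ H ωi
end

section
/- Edwards–Sokal theorem on a finite graph with ghost: the spin marginal of the Edwards–Sokal coupling P̂^{ES}_{J,H} (the pushforward under (σ,ω) ↦ σ) equals the Ising Gibbs measure P_{J,H}, and its bond marginal (the pushforward under (σ,ω) ↦ ω) equals the FK random-cluster measure with ghost P̂_{J,H}. -/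
open scoped Classical

set_option linter.unusedSectionVars false

namespace FK

variable {V : Type*} [Fintype V] [DecidableEq V]

section Aux

variable {E : Finset (Sym2 V)} {ω : GConfig E}

lemma adj_symm_s3 {ω : Config E} {u v : V} (h : adj E ω u v) : adj E ω v u := by
  obtain ⟨hne, he, hω⟩ := h
  refine ⟨hne.symm, ?_⟩
  rw [Sym2.eq_swap]
  exact ⟨he, hω⟩

lemma adjG_symm {x y : Option V} (h : adjG E ω x y) : adjG E ω y x := by
  match x, y, h with
  | some u, some v, h => exact adj_symm_s3 h
  | some u, none, h => exact h
  | none, some v, h => exact h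

lemma connG_symm {x y : Option V} (h : connG E ω x y) : connG E ω y x := by
  unfold connG at h ⊢
  induction h with
  | refl => exact Relation.ReflTransGen.refl
  | tail _ hab ih => exact Relation.ReflTransGen.head (adjG_symm hab) ih

/-- The spin configuration extended to the ghost vertex by `true`. -/
def σhat (σ : V → Bool) : Option V → Bool := fun x => x.elim true σ

/-- Compatibility of a spin configuration with a bond configuration, stated via
connectivity. -/
def CompatFun (E : Finset (Sym2 V)) (ω : GConfig E) (σ : V → Bool) : Prop :=
  ∀ x y, connG E ω x y → σhat σ x = σhat σ y

/-- Compatibility stated edge by edge, as in the Edwards–Sokal weight. -/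
def Compat (E : Finset (Sym2 V)) (ω : GConfig E) (σ : V → Bool) : Prop :=
  (∀ e : {e : Sym2 V // e ∈ E}, ω.1 e = true → ∀ u ∈ e.1, ∀ v ∈ e.1, σ u = σ v)
  ∧ ∀ v : V, ω.2 v = true → σ v = true

lemma compat_iff {σ : V → Bool} : Compat E ω σ ↔ CompatFun E ω σ := by
  constructor
  · rintro ⟨h1, h2⟩ x y hxy
    induction hxy with
    | refl => rfl
    | tail _ hadj ih =>
      refine ih.trans ?_
      rename_i b c _
      match b, c, hadj with
      | some u, some v, hadj =>
        obtain ⟨hne, he, hω⟩ := hadj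
        exact h1 ⟨s(u, v), he⟩ hω u (Sym2.mem_mk_left u v) v (Sym2.mem_mk_right u v)
      | some u, none, hadj => exact h2 u hadj
      | none, some v, hadj => exact (h2 v hadj).symm
  · intro h
    constructor
    · have main : ∀ e : Sym2 V, ∀ he : e ∈ E, ω.1 ⟨e, he⟩ = true →
          ∀ u ∈ e, ∀ v ∈ e, σ u = σ v := by
        refine Sym2.ind ?_
        intro a b he hω u hu v hv
        rw [Sym2.mem_iff] at hu hv
        rcases eq_or_ne a b with rfl | hab
        · rcases hu with rfl | rfl <;> rcases hv with rfl | rfl <;> rfl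
        · have hadj : adj E ω.1 a b := ⟨hab, he, hω⟩
          have hab' : σ a = σ b :=
            h (some a) (some b) (Relation.ReflTransGen.single hadj)
          rcases hu with rfl | rfl <;> rcases hv with rfl | rfl <;>
            simp [hab']
      exact fun e hω => main e.1 e.2 hω
    · intro v hv
      exact h (some v) none (Relation.ReflTransGen.single hv)

/-- Vertices not connected to the ghost. -/
noncomputable def ghostFree (E : Finset (Sym2 V)) (ω : GConfig E) : Finset V :=
  Finset.univ.filter (fun v => ¬ connG E ω (some v) none)

/-- The cluster of a vertex in the extended graph (intersected with `V`). -/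
noncomputable def clG (E : Finset (Sym2 V)) (ω : GConfig E) (v : V) : Finset V :=
  Finset.univ.filter (fun u : V => connG E ω (some v) (some u))

noncomputable def Tset (E : Finset (Sym2 V)) (ω : GConfig E) : Finset (Finset V) :=
  (ghostFree E ω).image (clG E ω)

lemma kGhost_eq_card_Tset : kGhost E ω = (Tset E ω).card := rfl

lemma mem_clG {u v : V} : u ∈ clG E ω v ↔ connG E ω (some v) (some u) := by
  simp [clG]

lemma mem_clG_self (v : V) : v ∈ clG E ω v := mem_clG.2 Relation.ReflTransGen.refl

lemma clG_eq_of_connG {u v : V} (h : connG E ω (some u) (some v)) :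
    clG E ω u = clG E ω v := by
  ext w
  simp only [mem_clG]
  exact ⟨fun hw => (connG_symm h).trans hw, fun hw => h.trans hw⟩

lemma mem_Tset_of_ghostFree {v : V} (hv : ¬ connG E ω (some v) none) :
    clG E ω v ∈ Tset E ω :=
  Finset.mem_image_of_mem _ (by simp [ghostFree, hv])

lemma compatFun_of_adj {σ : V → Bool}
    (h : ∀ x y, adjG E ω x y → σhat σ x = σhat σ y) : CompatFun E ω σ := by
  intro x y hxy
  induction hxy with
  | refl => rfl
  | tail _ hadj ih => exact ih.trans (h _ _ hadj)

/-- The compatible spin configurations are in bijection with Boolean functions on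
the ghost-free clusters. -/
noncomputable def compatEquiv (E : Finset (Sym2 V)) (ω : GConfig E) :
    {σ : V → Bool // CompatFun E ω σ} ≃ ({C : Finset V // C ∈ Tset E ω} → Bool) where
  toFun σ C := σ.1 (Finset.mem_image.mp C.2).choose
  invFun f := ⟨fun v => if h : connG E ω (some v) none then true
      else f ⟨clG E ω v, mem_Tset_of_ghostFree h⟩, by
    apply compatFun_of_adj
    intro x y hadj
    match x, y, hadj with
    | some u, some v, hadj =>
      have hconn : connG E ω (some u) (some v) := Relation.ReflTransGen.single hadj
      show (if h : connG E ω (some u) none then true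
          else f ⟨clG E ω u, mem_Tset_of_ghostFree h⟩)
        = (if h : connG E ω (some v) none then true
          else f ⟨clG E ω v, mem_Tset_of_ghostFree h⟩)
      by_cases hu : connG E ω (some u) none
      · have hv : connG E ω (some v) none := (connG_symm hconn).trans hu
        rw [dif_pos hu, dif_pos hv]
      · have hv : ¬ connG E ω (some v) none := fun hv => hu (hconn.trans hv)
        rw [dif_neg hu, dif_neg hv]
        congr 1
        exact Subtype.ext (clG_eq_of_connG hconn)
    | some u, none, hadj =>
      have hu : connG E ω (some u) none := Relation.ReflTransGen.single hadj
      show (if h : connG E ω (some u) none then true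
          else f ⟨clG E ω u, mem_Tset_of_ghostFree h⟩) = true
      rw [dif_pos hu]
    | none, some v, hadj =>
      have hv : connG E ω (some v) none := Relation.ReflTransGen.single hadj
      show true = (if h : connG E ω (some v) none then true
          else f ⟨clG E ω v, mem_Tset_of_ghostFree h⟩)
      rw [dif_pos hv]⟩
  left_inv := by
    rintro ⟨σ, hσ⟩
    apply Subtype.ext
    funext v
    show (if h : connG E ω (some v) none then true
        else σ (Finset.mem_image.mp (mem_Tset_of_ghostFree h)).choose) = σ v
    by_cases hv : connG E ω (some v) none
    · rw [dif_pos hv]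
      exact (hσ (some v) none hv).symm
    · rw [dif_neg hv]
      obtain ⟨hw1, hw2⟩ := (Finset.mem_image.mp (mem_Tset_of_ghostFree hv)).choose_spec
      have hvw : v ∈ clG E ω (Finset.mem_image.mp (mem_Tset_of_ghostFree hv)).choose := by
        rw [hw2]; exact mem_clG_self v
      exact hσ (some _) (some v) (mem_clG.mp hvw)
  right_inv := by
    intro f
    funext C
    obtain ⟨hw1, hw2⟩ := (Finset.mem_image.mp C.2).choose_spec
    have hw1' : ¬ connG E ω (some (Finset.mem_image.mp C.2).choose) none := by
      simpa [ghostFree] using hw1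
    show (if h : connG E ω (some (Finset.mem_image.mp C.2).choose) none then true
        else f ⟨clG E ω _, mem_Tset_of_ghostFree h⟩) = f C
    rw [dif_neg hw1']
    congr 1
    exact Subtype.ext hw2

lemma card_compatFun (E : Finset (Sym2 V)) (ω : GConfig E) :
    Fintype.card {σ : V → Bool // CompatFun E ω σ} = 2 ^ kGhost E ω := by
  rw [Fintype.card_congr (compatEquiv E ω), Fintype.card_fun, Fintype.card_bool,
    Fintype.card_coe, kGhost_eq_card_Tset]

lemma sum_ite_compatFun (E : Finset (Sym2 V)) (ω : GConfig E) (W : ℝ) :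
    (∑ σ : V → Bool, if CompatFun E ω σ then W else 0) = 2 ^ kGhost E ω * W := by
  rw [Finset.sum_ite, Finset.sum_const_zero, add_zero, Finset.sum_const, nsmul_eq_mul]
  congr 1
  rw [← Fintype.card_subtype, card_compatFun]
  push_cast
  ring

lemma sum_prod_bool {ι : Type*} [Fintype ι] [DecidableEq ι] (f : ι → Bool → ℝ) :
    (∑ x : ι → Bool, ∏ i, f i (x i)) = ∏ i, ∑ b : Bool, f i b :=
  (Fintype.prod_sum f).symm

lemma esWeight_eq_ite (J : Sym2 V → ℝ) (H : V → ℝ)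
    (σ : V → Bool) (ω : GConfig E) :
    esWeight J H E (σ, ω) =
      if CompatFun E ω σ then
        edgeWeight J E ω.1 *
          ∏ v, (if ω.2 v then 1 - Real.exp (-2 * H v) else Real.exp (-2 * H v))
      else 0 := by
  by_cases hc : CompatFun E ω σ
  · rw [if_pos hc]
    obtain ⟨h1, h2⟩ := compat_iff.mpr hc
    unfold esWeight edgeWeight
    congr 1
    · refine Finset.prod_congr rfl fun e _ => ?_
      by_cases he : ω.1 e = true
      · simp only [he, if_true, if_pos (h1 e he)]
      · simp only [Bool.not_eq_true] at he
        simp only [he, Bool.false_eq_true, if_false]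
    · refine Finset.prod_congr rfl fun v _ => ?_
      by_cases hv : ω.2 v = true
      · simp only [hv, if_true, if_pos (h2 v hv)]
      · simp only [Bool.not_eq_true] at hv
        simp only [hv, Bool.false_eq_true, if_false]
  · rw [if_neg hc]
    have hnc : ¬ Compat E ω σ := fun h => hc (compat_iff.mp h)
    rcases Classical.em (∀ e : {e : Sym2 V // e ∈ E}, ω.1 e = true →
        ∀ u ∈ e.1, ∀ v ∈ e.1, σ u = σ v) with hA | hA
    · have hB : ¬ ∀ v : V, ω.2 v = true → σ v = true := fun hB => hnc ⟨hA, hB⟩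
      push_neg at hB
      obtain ⟨v, hv1, hv2⟩ := hB
      refine mul_eq_zero_of_right _ (Finset.prod_eq_zero (Finset.mem_univ v) ?_)
      simp only [hv1, if_true, if_neg hv2]
    · push_neg at hA
      obtain ⟨e, he1, he2⟩ := hA
      refine mul_eq_zero_of_left (Finset.prod_eq_zero (Finset.mem_univ e) ?_) _
      simp only [he1, if_true]
      rw [if_neg]
      intro hcond
      obtain ⟨u, hu, v, hv, huv⟩ := he2
      exact huv (hcond u hu v hv)

lemma sum_esWeight_fk (J : Sym2 V → ℝ) (H : V → ℝ) (ω : GConfig E) :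
    ∑ σ : V → Bool, esWeight J H E (σ, ω) = fkWeight J H E ω := by
  simp only [esWeight_eq_ite]
  rw [sum_ite_compatFun]
  unfold fkWeight
  ring

lemma pair_cond_iff (σ : V → Bool) (a b : V) :
    (∀ u ∈ s(a, b), ∀ v ∈ s(a, b), σ u = σ v) ↔ σ a = σ b := by
  constructor
  · intro h
    exact h a (Sym2.mem_mk_left a b) b (Sym2.mem_mk_right a b)
  · intro h u hu v hv
    rw [Sym2.mem_iff] at hu hv
    rcases hu with rfl | rfl <;> rcases hv with rfl | rfl <;> simp [h]

lemma edge_factor_sum (J : Sym2 V → ℝ) (σ : V → Bool) (e : Sym2 V) :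
    ((if ∀ u ∈ e, ∀ v ∈ e, σ u = σ v then 1 - Real.exp (-2 * J e) else 0)
        + Real.exp (-2 * J e))
      = Real.exp (J e * pairSpin σ e - J e) := by
  refine Sym2.inductionOn e ?_
  intro a b
  have hps : pairSpin σ s(a, b) = spin (σ a) * spin (σ b) := rfl
  by_cases h : σ a = σ b
  · rw [if_pos ((pair_cond_iff σ a b).mpr h), hps]
    have h1 : spin (σ a) * spin (σ b) = 1 := by
      rw [h]; cases σ b <;> simp [spin]
    rw [h1]
    simp
  · rw [if_neg (fun hc => h ((pair_cond_iff σ a b).mp hc)), hps]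
    have h1 : spin (σ a) * spin (σ b) = -1 := by
      cases ha : σ a <;> cases hb : σ b <;> simp_all [spin]
    rw [h1]
    rw [zero_add]
    congr 1
    ring

lemma ghost_factor_sum (H : V → ℝ) (σ : V → Bool) (v : V) :
    ((if σ v = true then 1 - Real.exp (-2 * H v) else 0) + Real.exp (-2 * H v))
      = Real.exp (H v * spin (σ v) - H v) := by
  cases hσ : σ v <;> simp only [spin, hσ, if_true, if_false, Bool.false_eq_true]
  · rw [zero_add]
    congr 1
    ring
  · simp

lemma sum_esWeight_ising (J : Sym2 V → ℝ) (H : V → ℝ) (σ : V → Bool) :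
    ∑ ω : GConfig E, esWeight J H E (σ, ω)
      = Real.exp (-((∑ e ∈ E, J e) + ∑ v, H v)) * isingWeight J H E σ := by
  rw [Fintype.sum_prod_type]
  simp only [esWeight]
  rw [← Fintype.sum_mul_sum
    (fun ωi : Config E => ∏ e : {e : Sym2 V // e ∈ E},
      if ωi e then (if ∀ u ∈ e.1, ∀ v ∈ e.1, σ u = σ v then 1 - Real.exp (-2 * J e.1) else 0)
      else Real.exp (-2 * J e.1))
    (fun ωg : V → Bool => ∏ v, if ωg v then (if σ v = true then 1 - Real.exp (-2 * H v) else 0)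
      else Real.exp (-2 * H v))]
  rw [sum_prod_bool (fun (e : {e : Sym2 V // e ∈ E}) (b : Bool) =>
      if b = true then
        (if ∀ u ∈ e.1, ∀ v ∈ e.1, σ u = σ v then 1 - Real.exp (-2 * J e.1) else 0)
      else Real.exp (-2 * J e.1)),
    sum_prod_bool (fun (v : V) (b : Bool) =>
      if b = true then (if σ v = true then 1 - Real.exp (-2 * H v) else 0)
      else Real.exp (-2 * H v))]
  have h1 : ∀ e : {e : Sym2 V // e ∈ E},
      (∑ b : Bool, if b then
          (if ∀ u ∈ e.1, ∀ v ∈ e.1, σ u = σ v then 1 - Real.exp (-2 * J e.1) else 0)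
        else Real.exp (-2 * J e.1))
      = Real.exp (J e.1 * pairSpin σ e.1 - J e.1) := by
    intro e
    rw [Fintype.sum_bool]
    simpa using edge_factor_sum J σ e.1
  have h2 : ∀ v : V,
      (∑ b : Bool, if b then (if σ v = true then 1 - Real.exp (-2 * H v) else 0)
        else Real.exp (-2 * H v))
      = Real.exp (H v * spin (σ v) - H v) := by
    intro v
    rw [Fintype.sum_bool]
    simpa using ghost_factor_sum H σ v
  rw [Finset.prod_congr rfl fun e _ => h1 e, Finset.prod_congr rfl fun v _ => h2 v]
  rw [← Real.exp_sum, ← Real.exp_sum, ← Real.exp_add]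
  rw [Finset.sum_coe_sort E (fun e => J e * pairSpin σ e - J e)]
  unfold isingWeight
  rw [← Real.exp_add]
  congr 1
  rw [Finset.sum_sub_distrib, Finset.sum_sub_distrib]
  ring

end Aux

end FK

/-- the Edwards–Sokal coupling has the Ising measure as spin marginal
and the FK random-cluster measure with ghost as bond marginal. -/
theorem edwards_sokal_marginals
    {V : Type*} [Fintype V] [DecidableEq V]
    (E : Finset (Sym2 V)) (hE : ∀ e ∈ E, ¬ e.IsDiag)
    (J : Sym2 V → ℝ) (hJ : ∀ e ∈ E, 0 ≤ J e)
    (H : V → ℝ) (hH : ∀ v, 0 ≤ H v) :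
    (∀ σ : V → Bool,
        (∑ ω : FK.GConfig E, FK.esProb J H E (σ, ω)) = FK.isingProb J H E σ) ∧
    (∀ ω : FK.GConfig E,
        (∑ σ : V → Bool, FK.esProb J H E (σ, ω)) = FK.fkProb J H E ω) := by
  classical
  set c : ℝ := Real.exp (-((∑ e ∈ E, J e) + ∑ v, H v)) with hc
  have hcpos : 0 < c := Real.exp_pos _
  have hZes : (∑ p : (V → Bool) × FK.GConfig E, FK.esWeight J H E p)
      = c * ∑ σ : V → Bool, FK.isingWeight J H E σ := by
    rw [Fintype.sum_prod_type, Finset.mul_sum]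
    exact Finset.sum_congr rfl fun σ _ => FK.sum_esWeight_ising J H σ
  have hZfk : (∑ p : (V → Bool) × FK.GConfig E, FK.esWeight J H E p)
      = ∑ ω : FK.GConfig E, FK.fkWeight J H E ω := by
    rw [Fintype.sum_prod_type, Finset.sum_comm]
    exact Finset.sum_congr rfl fun ω _ => FK.sum_esWeight_fk J H ω
  constructor
  · intro σ
    unfold FK.esProb FK.isingProb
    rw [← Finset.sum_div, hZes, FK.sum_esWeight_ising J H σ,
      mul_div_mul_left _ _ (ne_of_gt hcpos)]
  · intro ω
    unfold FK.esProb FK.fkProb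
    rw [← Finset.sum_div, hZfk, FK.sum_esWeight_fk J H ω]
end

section
/- Truncated two-point function identity (finite-graph version of Lemma 2.1): for all x, y ∈ V, ⟨σ_x σ_y⟩_{J,H} − ⟨σ_x⟩_{J,H} ⟨σ_y⟩_{J,H} = P̂_{J,H}( x ↔ y ) − P̂_{J,H}( x ↔ g ) · P̂_{J,H}( y ↔ g ). -/
open scoped Classical

namespace FKAux
open FK

variable {V : Type*} [Fintype V] [DecidableEq V]

/-- extended spin with ghost spin `true` -/
def extS (σ : V → Bool) : Option V → Bool
  | none => true
  | some v => σ v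

/-- compatibility of a spin configuration with a bond configuration -/
def Compat (E : Finset (Sym2 V)) (ω : GConfig E) (σ : V → Bool) : Prop :=
  (∀ e : {e : Sym2 V // e ∈ E}, ω.1 e = true → ∀ u ∈ e.1, ∀ v ∈ e.1, σ u = σ v) ∧
  (∀ v, ω.2 v = true → σ v = true)

lemma adj_symm {E : Finset (Sym2 V)} {ω : Config E} {u v : V} (h : adj E ω u v) :
    adj E ω v u := by
  obtain ⟨hne, hmem, hop⟩ := h
  refine ⟨hne.symm, ?_⟩
  rw [Sym2.eq_swap]
  exact ⟨hmem, hop⟩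

lemma adjG_symm {E : Finset (Sym2 V)} {ω : GConfig E} {a b : Option V}
    (h : adjG E ω a b) : adjG E ω b a := by
  cases a <;> cases b <;> simp only [adjG] at * <;> first
    | exact h
    | exact adj_symm h

lemma connG_symm {E : Finset (Sym2 V)} {ω : GConfig E} {a b : Option V}
    (h : connG E ω a b) : connG E ω b a := by
  induction h with
  | refl => exact Relation.ReflTransGen.refl
  | tail _ hab ih => exact Relation.ReflTransGen.head (adjG_symm hab) ih

lemma connG_trans {E : Finset (Sym2 V)} {ω : GConfig E} {a b c : Option V}
    (h : connG E ω a b) (h' : connG E ω b c) : connG E ω a c :=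
  Relation.ReflTransGen.trans h h'

lemma compat_adjG {E : Finset (Sym2 V)} {ω : GConfig E} {σ : V → Bool}
    (hc : Compat E ω σ) {a b : Option V} (h : adjG E ω a b) :
    extS σ a = extS σ b := by
  cases a with
  | none =>
    cases b with
    | none => rfl
    | some v => exact (hc.2 v h).symm
  | some u =>
    cases b with
    | none => exact hc.2 u h
    | some v =>
      obtain ⟨hne, hmem, hop⟩ := h
      exact hc.1 ⟨s(u,v), hmem⟩ hop u (Sym2.mem_mk_left u v) v (Sym2.mem_mk_right u v)

lemma compat_connG {E : Finset (Sym2 V)} {ω : GConfig E} {σ : V → Bool}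
    (hc : Compat E ω σ) {a b : Option V} (h : connG E ω a b) :
    extS σ a = extS σ b := by
  induction h with
  | refl => rfl
  | tail _ hadj ih => exact ih.trans (compat_adjG hc hadj)

/-- the bond weight (without the cluster-count factor) -/
noncomputable def W (J : Sym2 V → ℝ) (H : V → ℝ) (E : Finset (Sym2 V)) (ω : GConfig E) : ℝ :=
  edgeWeight J E ω.1 * ∏ v, if ω.2 v then 1 - Real.exp (-2 * H v) else Real.exp (-2 * H v)

lemma esWeight_eq (J : Sym2 V → ℝ) (H : V → ℝ) (E : Finset (Sym2 V))
    (σ : V → Bool) (ω : GConfig E) :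
    esWeight J H E (σ, ω) = if Compat E ω σ then W J H E ω else 0 := by
  by_cases h : Compat E ω σ
  · rw [if_pos h]
    unfold esWeight W edgeWeight
    congr 1
    · refine Finset.prod_congr rfl fun e _ => ?_
      by_cases he : ω.1 e = true
      · simp only [he, if_true, if_pos (h.1 e he)]
      · simp only [Bool.not_eq_true] at he
        simp [he]
    · refine Finset.prod_congr rfl fun v _ => ?_
      by_cases hv : ω.2 v = true
      · simp only [hv, if_true, if_pos (h.2 v hv)]
      · simp only [Bool.not_eq_true] at hv
        simp [hv]
  · rw [if_neg h]
    unfold Compat at h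
    unfold esWeight
    rcases not_and_or.mp h with h1 | h2
    · push_neg at h1
      obtain ⟨e, hop, u, hu, v, hv, hne⟩ := h1
      apply mul_eq_zero_of_left
      refine Finset.prod_eq_zero (Finset.mem_univ e) ?_
      rw [hop, if_pos rfl, if_neg]
      intro hall
      exact hne (hall u hu v hv)
    · push_neg at h2
      obtain ⟨v, hop, hσ⟩ := h2
      apply mul_eq_zero_of_right
      refine Finset.prod_eq_zero (Finset.mem_univ v) ?_
      rw [hop, if_pos rfl, if_neg hσ]

lemma connG_of_mem {E : Finset (Sym2 V)} {ω : GConfig E} {e : {e : Sym2 V // e ∈ E}}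
    (hop : ω.1 e = true) {u v : V} (hu : u ∈ e.1) (hv : v ∈ e.1) :
    connG E ω (some u) (some v) := by
  by_cases huv : u = v
  · subst huv; exact Relation.ReflTransGen.refl
  · refine Relation.ReflTransGen.single ?_
    have he : e.1 = s(u, v) := (Sym2.mem_and_mem_iff huv).mp ⟨hu, hv⟩
    have hmem : s(u, v) ∈ E := he ▸ e.2
    have heq : (⟨s(u,v), hmem⟩ : {e : Sym2 V // e ∈ E}) = e := Subtype.ext he.symm
    exact ⟨huv, hmem, by rw [heq]; exact hop⟩

lemma connG_ghost {E : Finset (Sym2 V)} {ω : GConfig E} {v : V} (hv : ω.2 v = true) :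
    connG E ω (some v) none :=
  Relation.ReflTransGen.single hv

/-- the extended cluster of a vertex -/
noncomputable def clG (E : Finset (Sym2 V)) (ω : GConfig E) (v : V) : Finset V :=
  Finset.univ.filter (fun u => connG E ω (some v) (some u))

lemma clG_eq_of_connG {E : Finset (Sym2 V)} {ω : GConfig E} {u v : V}
    (h : connG E ω (some u) (some v)) : clG E ω u = clG E ω v := by
  ext w
  simp only [clG, Finset.mem_filter, Finset.mem_univ, true_and]
  exact ⟨fun hw => connG_trans (connG_symm h) hw, fun hw => connG_trans h hw⟩

lemma mem_clG_self (E : Finset (Sym2 V)) (ω : GConfig E) (v : V) : v ∈ clG E ω v := by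
  simp only [clG, Finset.mem_filter, Finset.mem_univ, true_and]
  exact Relation.ReflTransGen.refl

lemma card_compat (E : Finset (Sym2 V)) (ω : GConfig E) :
    (Finset.univ.filter (fun σ : V → Bool => Compat E ω σ)).card = 2 ^ kGhost E ω := by
  classical
  set Cs := (Finset.univ.filter fun v => ¬ connG E ω (some v) none).image (clG E ω) with hCs
  have hk : kGhost E ω = Cs.card := rfl
  have hcard : (Finset.univ : Finset ({c // c ∈ Cs} → Bool)).card = 2 ^ Cs.card := by
    rw [Finset.card_univ, Fintype.card_fun, Fintype.card_bool, Fintype.card_coe]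
  rw [hk, ← hcard]
  refine Finset.card_bij'
    (fun σ _ => fun c => σ (Finset.mem_image.mp c.2).choose)
    (fun f _ => fun v => if connG E ω (some v) none then true
        else if h : clG E ω v ∈ Cs then f ⟨clG E ω v, h⟩ else true)
    (fun σ _ => Finset.mem_univ _) ?_ ?_ ?_
  · -- hj : the reconstructed configuration is compatible
    intro f _
    refine Finset.mem_filter.mpr ⟨Finset.mem_univ _, ?_, ?_⟩
    · intro e hop u hu v hv
      have hc := connG_of_mem hop hu hv
      by_cases hg : connG E ω (some u) none
      · have hg' : connG E ω (some v) none := connG_trans (connG_symm hc) hg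
        simp only [if_pos hg, if_pos hg']
      · have hg' : ¬ connG E ω (some v) none := fun h => hg (connG_trans hc h)
        simp only [if_neg hg, if_neg hg', clG_eq_of_connG hc]
    · intro v hv
      simp only [if_pos (connG_ghost hv)]
  · -- left inverse
    intro σ hσ
    have hc : Compat E ω σ := (Finset.mem_filter.mp hσ).2
    funext v
    by_cases hg : connG E ω (some v) none
    · simp only [if_pos hg]
      exact (compat_connG hc hg).symm
    · have hmem : clG E ω v ∈ Cs :=
        Finset.mem_image.mpr ⟨v, Finset.mem_filter.mpr ⟨Finset.mem_univ v, hg⟩, rfl⟩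
      simp only [if_neg hg, dif_pos hmem]
      obtain ⟨_, hrc⟩ := (Finset.mem_image.mp hmem).choose_spec
      have hvmem : v ∈ clG E ω (Finset.mem_image.mp hmem).choose := by
        rw [hrc]; exact mem_clG_self E ω v
      have hconn : connG E ω (some (Finset.mem_image.mp hmem).choose) (some v) := by
        simpa only [clG, Finset.mem_filter, Finset.mem_univ, true_and] using hvmem
      exact compat_connG hc hconn
  · -- right inverse
    intro f _
    funext c
    obtain ⟨hr1, hr2⟩ := (Finset.mem_image.mp c.2).choose_spec
    have hng : ¬ connG E ω (some (Finset.mem_image.mp c.2).choose) none :=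
      (Finset.mem_filter.mp hr1).2
    simp only [if_neg hng]
    rw [hr2, dif_pos c.2]

/-- flip the spins on the extended cluster of `z` -/
noncomputable def flip (E : Finset (Sym2 V)) (ω : GConfig E) (z : V) (σ : V → Bool) : V → Bool :=
  fun v => if connG E ω (some z) (some v) then !(σ v) else σ v

lemma flip_flip (E : Finset (Sym2 V)) (ω : GConfig E) (z : V) (σ : V → Bool) :
    flip E ω z (flip E ω z σ) = σ := by
  funext v
  unfold flip
  by_cases h : connG E ω (some z) (some v) <;> simp [h]

lemma flip_self (E : Finset (Sym2 V)) (ω : GConfig E) (z : V) (σ : V → Bool) :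
    flip E ω z σ z = !(σ z) := by
  have h : connG E ω (some z) (some z) := Relation.ReflTransGen.refl
  unfold flip
  rw [if_pos h]

lemma flip_of_not_conn {E : Finset (Sym2 V)} {ω : GConfig E} {z v : V}
    (h : ¬ connG E ω (some z) (some v)) (σ : V → Bool) : flip E ω z σ v = σ v := by
  unfold flip
  rw [if_neg h]

lemma compat_flip {E : Finset (Sym2 V)} {ω : GConfig E} {z : V}
    (hz : ¬ connG E ω (some z) none) {σ : V → Bool} (hc : Compat E ω σ) :
    Compat E ω (flip E ω z σ) := by
  constructor
  · intro e hop u hu v hv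
    have hσ := hc.1 e hop u hu v hv
    have hcn := connG_of_mem hop hu hv
    unfold flip
    by_cases h : connG E ω (some z) (some u)
    · rw [if_pos h, if_pos (connG_trans h hcn), hσ]
    · rw [if_neg h, if_neg (fun h' => h (connG_trans h' (connG_symm hcn))), hσ]
  · intro v hv
    have hn : ¬ connG E ω (some z) (some v) :=
      fun h => hz (connG_trans h (connG_ghost hv))
    rw [flip_of_not_conn hn]
    exact hc.2 v hv

lemma esWeight_flip (J : Sym2 V → ℝ) (H : V → ℝ) {E : Finset (Sym2 V)} {ω : GConfig E}
    {z : V} (hz : ¬ connG E ω (some z) none) (σ : V → Bool) :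
    esWeight J H E (flip E ω z σ, ω) = esWeight J H E (σ, ω) := by
  rw [esWeight_eq, esWeight_eq]
  have hiff : Compat E ω (flip E ω z σ) ↔ Compat E ω σ := by
    constructor
    · intro h
      have := compat_flip hz h
      rwa [flip_flip] at this
    · exact compat_flip hz
  exact if_congr hiff rfl rfl

lemma sum_flip_zero (J : Sym2 V → ℝ) (H : V → ℝ) {E : Finset (Sym2 V)} {ω : GConfig E}
    {z : V} (hz : ¬ connG E ω (some z) none) (F : (V → Bool) → ℝ)
    (hF : ∀ σ, F (flip E ω z σ) = - F σ) :
    ∑ σ : V → Bool, esWeight J H E (σ, ω) * F σ = 0 := by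
  refine Finset.sum_involution (fun σ _ => flip E ω z σ)
    (fun σ _ => by rw [esWeight_flip J H hz, hF]; ring)
    (fun σ _ _ heq => ?_) (fun σ _ => Finset.mem_univ _)
    (fun σ _ => flip_flip E ω z σ)
  have := congrFun heq z
  simp only [flip_self] at this
  simp at this

lemma spin_mul_self (b : Bool) : spin b * spin b = 1 := by
  cases b <;> norm_num [spin]

lemma spin_not (b : Bool) : spin (!b) = - spin b := by
  cases b <;> norm_num [spin]

lemma sum_es_sigma (J : Sym2 V → ℝ) (H : V → ℝ) (E : Finset (Sym2 V)) (ω : GConfig E) :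
    ∑ σ : V → Bool, esWeight J H E (σ, ω) = fkWeight J H E ω := by
  simp only [esWeight_eq]
  rw [← Finset.sum_filter]
  simp only [Finset.sum_const, card_compat, nsmul_eq_mul]
  unfold fkWeight W
  push_cast
  ring

lemma es_spin_two (J : Sym2 V → ℝ) (H : V → ℝ) (E : Finset (Sym2 V)) (ω : GConfig E)
    (x y : V) :
    ∑ σ : V → Bool, esWeight J H E (σ, ω) * (spin (σ x) * spin (σ y))
      = (if connG E ω (some x) (some y) then 1 else 0) * fkWeight J H E ω := by
  by_cases h : connG E ω (some x) (some y)
  · rw [if_pos h, one_mul, ← sum_es_sigma J H E ω]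
    refine Finset.sum_congr rfl fun σ _ => ?_
    rw [esWeight_eq]
    by_cases hc : Compat E ω σ
    · have hxy : σ x = σ y := compat_connG hc h
      rw [if_pos hc, hxy, spin_mul_self, mul_one]
    · rw [if_neg hc]; ring
  · rw [if_neg h, zero_mul]
    by_cases hx : connG E ω (some x) none
    · have hy : ¬ connG E ω (some y) none :=
        fun h' => h (connG_trans hx (connG_symm h'))
      refine sum_flip_zero J H hy _ fun σ => ?_
      have h1 : flip E ω y σ y = !(σ y) := flip_self E ω y σ
      have h2 : flip E ω y σ x = σ x :=
        flip_of_not_conn (fun h' => h (connG_symm h')) σ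
      rw [h1, h2, spin_not]
      ring
    · refine sum_flip_zero J H hx _ fun σ => ?_
      have h1 : flip E ω x σ x = !(σ x) := flip_self E ω x σ
      have h2 : flip E ω x σ y = σ y := flip_of_not_conn h σ
      rw [h1, h2, spin_not]
      ring

lemma es_spin_one (J : Sym2 V → ℝ) (H : V → ℝ) (E : Finset (Sym2 V)) (ω : GConfig E)
    (x : V) :
    ∑ σ : V → Bool, esWeight J H E (σ, ω) * spin (σ x)
      = (if connG E ω (some x) none then 1 else 0) * fkWeight J H E ω := by
  by_cases h : connG E ω (some x) none
  · rw [if_pos h, one_mul, ← sum_es_sigma J H E ω]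
    refine Finset.sum_congr rfl fun σ _ => ?_
    rw [esWeight_eq]
    by_cases hc : Compat E ω σ
    · have hx : σ x = true := compat_connG hc h
      rw [if_pos hc, hx]
      norm_num [spin]
    · rw [if_neg hc]; ring
  · rw [if_neg h, zero_mul]
    refine sum_flip_zero J H h _ fun σ => ?_
    rw [flip_self, spin_not]

lemma per_edge (σ : V → Bool) (J : ℝ) (e : Sym2 V) :
    ((if ∀ u ∈ e, ∀ v ∈ e, σ u = σ v then 1 - Real.exp (-2 * J) else 0)
      + Real.exp (-2 * J))
      = Real.exp (-J) * Real.exp (J * pairSpin σ e) := by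
  induction e using Sym2.inductionOn with
  | hf a b =>
    have hps : pairSpin σ s(a, b) = spin (σ a) * spin (σ b) := rfl
    rw [hps]
    by_cases h : σ a = σ b
    · have hcond : ∀ u ∈ s(a, b), ∀ v ∈ s(a, b), σ u = σ v := by
        intro u hu v hv
        rcases Sym2.mem_iff.mp hu with rfl | rfl <;>
          rcases Sym2.mem_iff.mp hv with rfl | rfl <;> simp [h]
      rw [if_pos hcond]
      have hs : spin (σ a) * spin (σ b) = 1 := by rw [h]; exact spin_mul_self _
      rw [hs, ← Real.exp_add]
      norm_num
    · have hcond : ¬ ∀ u ∈ s(a, b), ∀ v ∈ s(a, b), σ u = σ v := fun hc =>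
        h (hc a (Sym2.mem_mk_left a b) b (Sym2.mem_mk_right a b))
      rw [if_neg hcond]
      have hs : spin (σ a) * spin (σ b) = -1 := by
        cases ha : σ a <;> cases hb : σ b <;> simp_all [spin]
      rw [hs, ← Real.exp_add, zero_add]
      congr 1
      ring

lemma per_vertex (b : Bool) (H : ℝ) :
    ((if b = true then 1 - Real.exp (-2 * H) else 0) + Real.exp (-2 * H))
      = Real.exp (-H) * Real.exp (H * spin b) := by
  cases b
  · rw [if_neg (by simp), zero_add, ← Real.exp_add]
    have : spin false = (-1 : ℝ) := rfl
    rw [this]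
    congr 1
    ring
  · rw [if_pos rfl, ← Real.exp_add]
    have : spin true = (1 : ℝ) := rfl
    rw [this]
    norm_num

lemma sum_es_omega (J : Sym2 V → ℝ) (H : V → ℝ) (E : Finset (Sym2 V)) (σ : V → Bool) :
    ∑ ω : GConfig E, esWeight J H E (σ, ω)
      = Real.exp (-(∑ e ∈ E, J e) - ∑ v, H v) * isingWeight J H E σ := by
  classical
  have hsplit : ∑ ω : GConfig E, esWeight J H E (σ, ω)
      = (∑ ωi : Config E, ∏ e : {e : Sym2 V // e ∈ E},
          if ωi e then
            (if ∀ u ∈ e.1, ∀ v ∈ e.1, σ u = σ v then 1 - Real.exp (-2 * J e.1) else 0)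
          else Real.exp (-2 * J e.1))
        * (∑ ωg : V → Bool, ∏ v, if ωg v then
            (if σ v = true then 1 - Real.exp (-2 * H v) else 0)
          else Real.exp (-2 * H v)) := by
    rw [Fintype.sum_prod_type, Finset.sum_mul_sum]
    rfl
  have h1 : (∑ ωi : Config E, ∏ e : {e : Sym2 V // e ∈ E},
          if ωi e then
            (if ∀ u ∈ e.1, ∀ v ∈ e.1, σ u = σ v then 1 - Real.exp (-2 * J e.1) else 0)
          else Real.exp (-2 * J e.1))
      = ∏ e : {e : Sym2 V // e ∈ E}, Real.exp (-(J e.1)) * Real.exp (J e.1 * pairSpin σ e.1) := by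
    have := Finset.prod_univ_sum (fun _ : {e : Sym2 V // e ∈ E} => (Finset.univ : Finset Bool))
      (fun e b =>
        if b then
          (if ∀ u ∈ e.1, ∀ v ∈ e.1, σ u = σ v then 1 - Real.exp (-2 * J e.1) else 0)
        else Real.exp (-2 * J e.1))
    rw [Fintype.piFinset_univ] at this
    rw [← this]
    refine Finset.prod_congr rfl fun e _ => ?_
    rw [Fintype.sum_bool]
    simp only [eq_self_iff_true, if_true, Bool.false_eq_true, if_false]
    exact per_edge σ (J e.1) e.1
  have h2 : (∑ ωg : V → Bool, ∏ v, if ωg v then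
            (if σ v = true then 1 - Real.exp (-2 * H v) else 0)
          else Real.exp (-2 * H v))
      = ∏ v, Real.exp (-(H v)) * Real.exp (H v * spin (σ v)) := by
    have := Finset.prod_univ_sum (fun _ : V => (Finset.univ : Finset Bool))
      (fun v b =>
        if b then (if σ v = true then 1 - Real.exp (-2 * H v) else 0)
        else Real.exp (-2 * H v))
    rw [Fintype.piFinset_univ] at this
    rw [← this]
    refine Finset.prod_congr rfl fun v _ => ?_
    rw [Fintype.sum_bool]
    simp only [eq_self_iff_true, if_true, Bool.false_eq_true, if_false]
    exact per_vertex (σ v) (H v)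
  rw [hsplit, h1, h2]
  simp only [← Real.exp_add]
  rw [← Real.exp_sum, ← Real.exp_sum, ← Real.exp_add, isingWeight, ← Real.exp_add]
  congr 1
  rw [Finset.sum_add_distrib, Finset.sum_add_distrib]
  have hJ1 : ∑ e : {e : Sym2 V // e ∈ E}, -(J e.1) = -(∑ e ∈ E, J e) := by
    rw [← Finset.sum_neg_distrib]
    exact Finset.sum_coe_sort E (fun e => -(J e))
  have hJ2 : ∑ e : {e : Sym2 V // e ∈ E}, J e.1 * pairSpin σ e.1
      = ∑ e ∈ E, J e * pairSpin σ e :=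
    Finset.sum_coe_sort E (fun e => J e * pairSpin σ e)
  rw [hJ1, hJ2, Finset.sum_neg_distrib]
  ring

lemma master (J : Sym2 V → ℝ) (H : V → ℝ) (E : Finset (Sym2 V))
    (F : (V → Bool) → ℝ) (P : GConfig E → Prop)
    (h : ∀ ω : GConfig E, ∑ σ : V → Bool, esWeight J H E (σ, ω) * F σ
        = (if P ω then 1 else 0) * fkWeight J H E ω) :
    ∑ σ : V → Bool, isingProb J H E σ * F σ
      = ∑ ω : GConfig E, (if P ω then fkProb J H E ω else 0) := by
  classical
  set c := Real.exp (-(∑ e ∈ E, J e) - ∑ v, H v) with hc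
  have hcpos : 0 < c := Real.exp_pos _
  have hZi : 0 < ∑ σ : V → Bool, isingWeight J H E σ := by
    refine Finset.sum_pos (fun σ _ => Real.exp_pos _) ?_
    exact ⟨fun _ => true, Finset.mem_univ _⟩
  have hZfk : ∑ ω : GConfig E, fkWeight J H E ω
      = c * ∑ σ : V → Bool, isingWeight J H E σ := by
    calc ∑ ω : GConfig E, fkWeight J H E ω
        = ∑ ω : GConfig E, ∑ σ : V → Bool, esWeight J H E (σ, ω) := by
          simp only [sum_es_sigma]
      _ = ∑ σ : V → Bool, ∑ ω : GConfig E, esWeight J H E (σ, ω) := Finset.sum_comm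
      _ = ∑ σ : V → Bool, c * isingWeight J H E σ := by
          refine Finset.sum_congr rfl fun σ _ => ?_
          rw [sum_es_omega, ← hc]
      _ = c * ∑ σ : V → Bool, isingWeight J H E σ := by rw [Finset.mul_sum]
  have hnum : ∑ ω : GConfig E, (if P ω then fkWeight J H E ω else 0)
      = c * ∑ σ : V → Bool, isingWeight J H E σ * F σ := by
    calc ∑ ω : GConfig E, (if P ω then fkWeight J H E ω else 0)
        = ∑ ω : GConfig E, (if P ω then 1 else 0) * fkWeight J H E ω := by
          refine Finset.sum_congr rfl fun ω _ => ?_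
          split <;> simp
      _ = ∑ ω : GConfig E, ∑ σ : V → Bool, esWeight J H E (σ, ω) * F σ := by
          simp only [h]
      _ = ∑ σ : V → Bool, ∑ ω : GConfig E, esWeight J H E (σ, ω) * F σ := Finset.sum_comm
      _ = ∑ σ : V → Bool, (∑ ω : GConfig E, esWeight J H E (σ, ω)) * F σ := by
          simp only [Finset.sum_mul]
      _ = ∑ σ : V → Bool, c * (isingWeight J H E σ * F σ) := by
          refine Finset.sum_congr rfl fun σ _ => ?_
          rw [sum_es_omega, ← hc, mul_assoc]
      _ = c * ∑ σ : V → Bool, isingWeight J H E σ * F σ := by rw [Finset.mul_sum]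
  have hL : ∑ σ : V → Bool, isingProb J H E σ * F σ
      = (∑ σ : V → Bool, isingWeight J H E σ * F σ)
        / (∑ σ' : V → Bool, isingWeight J H E σ') := by
    rw [Finset.sum_div]
    refine Finset.sum_congr rfl fun σ _ => ?_
    rw [isingProb, div_mul_eq_mul_div]
  have hR : ∑ ω : GConfig E, (if P ω then fkProb J H E ω else 0)
      = (∑ ω : GConfig E, (if P ω then fkWeight J H E ω else 0))
        / (∑ ω' : GConfig E, fkWeight J H E ω') := by
    rw [Finset.sum_div]
    refine Finset.sum_congr rfl fun ω _ => ?_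
    rw [fkProb]
    split <;> simp
  rw [hL, hR, hnum, hZfk, mul_div_mul_left _ _ (ne_of_gt hcpos)]

end FKAux

/-- truncated two-point function identity. -/
theorem truncated_two_point_identity
    {V : Type*} [Fintype V] [DecidableEq V]
    (E : Finset (Sym2 V)) (hE : ∀ e ∈ E, ¬ e.IsDiag)
    (J : Sym2 V → ℝ) (hJ : ∀ e ∈ E, 0 ≤ J e)
    (H : V → ℝ) (hH : ∀ v, 0 ≤ H v) (x y : V) :
    (∑ σ : V → Bool, FK.isingProb J H E σ * (FK.spin (σ x) * FK.spin (σ y)))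
      - (∑ σ : V → Bool, FK.isingProb J H E σ * FK.spin (σ x))
        * (∑ σ : V → Bool, FK.isingProb J H E σ * FK.spin (σ y))
    = (∑ ω : FK.GConfig E,
          if FK.connG E ω (some x) (some y) then FK.fkProb J H E ω else 0)
      - (∑ ω : FK.GConfig E,
          if FK.connG E ω (some x) none then FK.fkProb J H E ω else 0)
        * (∑ ω : FK.GConfig E,
          if FK.connG E ω (some y) none then FK.fkProb J H E ω else 0) := by
  rw [FKAux.master J H E (fun σ => FK.spin (σ x) * FK.spin (σ y))
      (fun ω => FK.connG E ω (some x) (some y))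
      (fun ω => FKAux.es_spin_two J H E ω x y),
    FKAux.master J H E (fun σ => FK.spin (σ x))
      (fun ω => FK.connG E ω (some x) none)
      (fun ω => FKAux.es_spin_one J H E ω x),
    FKAux.master J H E (fun σ => FK.spin (σ y))
      (fun ω => FK.connG E ω (some y) none)
      (fun ω => FKAux.es_spin_one J H E ω y)]
end

section
/- Edwards–Sokal moment generating function identity (finite-graph version of the equality in Proposition 3.3 and of equation (5.5)): for every function f : V → ℝ, E_{P_{J,0}}[ exp( ∑_{v∈V} f_v σ_v ) ] = E_{P̃_{J,0}}[ ∏_{C a cluster of ω̃} cosh( ∑_{v∈C} f_v ) ]; moreover, if f_v ≥ 0 for all v, both sides are ≥ 1. -/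
open scoped Classical

namespace ESAux

open FK

variable {V : Type*} [Fintype V] [DecidableEq V]

lemma adj_symm (E : Finset (Sym2 V)) (ω : Config E) : Symmetric (adj E ω) := by
  rintro u v ⟨hne, he, hω⟩
  refine ⟨hne.symm, ?_⟩
  have hsw : s(v, u) = s(u, v) := Sym2.eq_swap
  rw [hsw]
  exact ⟨he, hω⟩

/-- Connectivity as a setoid. -/
def connSetoid (E : Finset (Sym2 V)) (ω : Config E) : Setoid V :=
  ⟨conn E ω, ⟨fun _ => Relation.ReflTransGen.refl,
    fun h => by haveI : Std.Symm (adj E ω) := ⟨adj_symm E ω⟩; exact (Relation.ReflTransGen.stdSymm (r := adj E ω)).symm _ _ h,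
    fun h h' => Relation.ReflTransGen.trans h h'⟩⟩

noncomputable def fiber (E : Finset (Sym2 V)) (ω : Config E)
    (q : Quotient (connSetoid E ω)) : Finset V :=
  Finset.univ.filter (fun v => Quotient.mk (connSetoid E ω) v = q)

lemma mem_fiber (E : Finset (Sym2 V)) (ω : Config E) (q : Quotient (connSetoid E ω))
    (v : V) : v ∈ fiber E ω q ↔ Quotient.mk (connSetoid E ω) v = q := by
  simp [fiber]

lemma cluster_eq_fiber (E : Finset (Sym2 V)) (ω : Config E) (v : V) :
    cluster E ω v = fiber E ω (Quotient.mk (connSetoid E ω) v) := by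
  ext u
  simp only [cluster, Finset.mem_filter, Finset.mem_univ, true_and, mem_fiber]
  constructor
  · intro h
    exact Quotient.sound ((connSetoid E ω).symm h)
  · intro h
    exact (connSetoid E ω).symm (Quotient.exact h)

lemma fiber_injective (E : Finset (Sym2 V)) (ω : Config E) :
    Function.Injective (fiber E ω) := by
  intro q q' h
  have h1 : q.out ∈ fiber E ω q := by
    rw [mem_fiber]; exact Quotient.out_eq q
  rw [h, mem_fiber] at h1
  rw [← Quotient.out_eq q, h1]

lemma clusters_eq_image (E : Finset (Sym2 V)) (ω : Config E) :
    clusters E ω = Finset.univ.image (fiber E ω) := by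
  ext C
  simp only [clusters, Finset.mem_image, Finset.mem_univ, true_and]
  constructor
  · rintro ⟨v, rfl⟩
    exact ⟨Quotient.mk (connSetoid E ω) v, (cluster_eq_fiber E ω v).symm⟩
  · rintro ⟨q, rfl⟩
    exact ⟨q.out, by rw [cluster_eq_fiber, Quotient.out_eq]⟩

lemma card_clusters (E : Finset (Sym2 V)) (ω : Config E) :
    (clusters E ω).card = Fintype.card (Quotient (connSetoid E ω)) := by
  rw [clusters_eq_image, Finset.card_image_of_injective _ (fiber_injective E ω),
    Finset.card_univ]

lemma prod_clusters (E : Finset (Sym2 V)) (ω : Config E) (g : Finset V → ℝ) :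
    ∏ C ∈ clusters E ω, g C = ∏ q : Quotient (connSetoid E ω), g (fiber E ω q) := by
  rw [clusters_eq_image, Finset.prod_image]
  intro q _ q' _ h
  exact fiber_injective E ω h

/-- Agreement of a spin configuration on a single edge. -/
def eAgree (σ : V → Bool) (e : Sym2 V) : Prop := ∀ u ∈ e, ∀ v ∈ e, σ u = σ v

lemma eAgree_mk (σ : V → Bool) (a b : V) : eAgree σ s(a, b) ↔ σ a = σ b := by
  constructor
  · intro h
    exact h a (Sym2.mem_mk_left a b) b (Sym2.mem_mk_right a b)
  · intro h u hu v hv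
    rw [Sym2.mem_iff] at hu hv
    rcases hu with rfl | rfl <;> rcases hv with rfl | rfl <;>
      first | rfl | exact h | exact h.symm

/-- Global agreement: constant on connected clusters. -/
def compat (E : Finset (Sym2 V)) (ω : Config E) (σ : V → Bool) : Prop :=
  ∀ u v, conn E ω u v → σ u = σ v

/-- The per-edge weight depending on the bond value. -/
noncomputable def edgeF (J : Sym2 V → ℝ) {E : Finset (Sym2 V)} (σ : V → Bool)
    (e : {e : Sym2 V // e ∈ E}) (b : Bool) : ℝ :=
  if b then (if eAgree σ e.1 then 1 - Real.exp (-2 * J e.1) else 0)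
  else Real.exp (-2 * J e.1)

lemma spin_sq (b : Bool) : spin b * spin b = 1 := by cases b <;> simp [spin]

lemma factor_eq (J : Sym2 V → ℝ) {E : Finset (Sym2 V)} (σ : V → Bool)
    (e : {e : Sym2 V // e ∈ E}) :
    Real.exp (J e.1 * pairSpin σ e.1) =
      Real.exp (J e.1) * ∑ b : Bool, edgeF J σ e b := by
  obtain ⟨e, he⟩ := e
  induction e using Sym2.inductionOn with
  | hf x y =>
    have hsum : ∑ b : Bool, edgeF J σ (⟨s(x, y), he⟩ : {e : Sym2 V // e ∈ E}) b =
        (if σ x = σ y then 1 - Real.exp (-2 * J s(x, y)) else 0) +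
          Real.exp (-2 * J s(x, y)) := by
      rw [Fintype.sum_bool]
      simp [edgeF, eAgree_mk]
    rw [hsum]
    have hps : pairSpin σ s(x, y) = spin (σ x) * spin (σ y) := by
      simp [pairSpin]
    by_cases h : σ x = σ y
    · have hp1 : pairSpin σ s(x, y) = 1 := by rw [hps, h]; exact spin_sq (σ y)
      rw [if_pos h, hp1, mul_one]
      have h2 : 1 - Real.exp (-2 * J s(x, y)) + Real.exp (-2 * J s(x, y)) = 1 := by
        ring
      rw [h2, mul_one]
    · have hsp : spin (σ x) * spin (σ y) = -1 := by
        cases hx : σ x <;> cases hy : σ y <;> simp_all [spin]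
      have hp1 : pairSpin σ s(x, y) = -1 := by rw [hps, hsp]
      rw [if_neg h, hp1, zero_add, ← Real.exp_add]
      congr 1
      ring

lemma compat_of_eAgree {E : Finset (Sym2 V)} (ω : Config E) (σ : V → Bool)
    (h : ∀ e : {e : Sym2 V // e ∈ E}, ω e = true → eAgree σ e.1) :
    compat E ω σ := by
  intro u v huv
  induction huv with
  | refl => rfl
  | @tail w x _hc hadj ih =>
    obtain ⟨hne, hmem, hopen⟩ := hadj
    have := (eAgree_mk σ w x).mp (h ⟨s(w, x), hmem⟩ hopen)
    rw [ih, this]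

lemma exists_bad_edge {E : Finset (Sym2 V)} (ω : Config E) (σ : V → Bool)
    (h : ¬ compat E ω σ) :
    ∃ e : {e : Sym2 V // e ∈ E}, ω e = true ∧ ¬ eAgree σ e.1 := by
  by_contra hc
  push_neg at hc
  exact h (compat_of_eAgree ω σ hc)

lemma prod_edgeF (J : Sym2 V → ℝ) (E : Finset (Sym2 V)) (ω : Config E) (σ : V → Bool) :
    ∏ e : {e : Sym2 V // e ∈ E}, edgeF J σ e (ω e) =
      if compat E ω σ then edgeWeight J E ω else 0 := by
  by_cases h : compat E ω σ
  · rw [if_pos h, edgeWeight]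
    refine Finset.prod_congr rfl fun e _ => ?_
    by_cases hb : ω e = true
    · have hag : eAgree σ e.1 := by
        obtain ⟨e', he'⟩ := e
        induction e' using Sym2.inductionOn with
        | hf a b =>
          rw [eAgree_mk]
          by_cases hab : a = b
          · rw [hab]
          · exact h a b (Relation.ReflTransGen.single ⟨hab, he', hb⟩)
      simp [edgeF, hb, hag]
    · simp only [Bool.not_eq_true] at hb
      simp [edgeF, hb]
  · rw [if_neg h]
    obtain ⟨e, hopen, hbad⟩ := exists_bad_edge ω σ h
    refine Finset.prod_eq_zero (Finset.mem_univ e) ?_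
    simp [edgeF, hopen, hbad]

lemma sum_compat (E : Finset (Sym2 V)) (ω : Config E) (g : (V → Bool) → ℝ) :
    (∑ σ : V → Bool, if compat E ω σ then g σ else 0)
      = ∑ τ : Quotient (connSetoid E ω) → Bool,
          g (fun v => τ (Quotient.mk (connSetoid E ω) v)) := by
  rw [← Finset.sum_filter]
  have himg : (Finset.univ.filter (compat E ω)) =
      Finset.univ.image
        (fun τ : Quotient (connSetoid E ω) → Bool =>
          fun v => τ (Quotient.mk (connSetoid E ω) v)) := by
    ext σ
    simp only [Finset.mem_filter, Finset.mem_univ, true_and, Finset.mem_image]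
    constructor
    · intro h
      refine ⟨fun q => σ q.out, funext fun v => ?_⟩
      have hcv : conn E ω (Quotient.mk (connSetoid E ω) v).out v :=
        Quotient.exact (Quotient.out_eq (Quotient.mk (connSetoid E ω) v))
      exact h _ _ hcv
    · rintro ⟨τ, rfl⟩ u v huv
      simp only
      rw [Quotient.sound huv]
  rw [himg, Finset.sum_image]
  intro τ _ τ' _ h
  funext q
  have := congrFun h q.out
  simpa [Quotient.out_eq] using this

lemma inner_eq (J : Sym2 V → ℝ) (E : Finset (Sym2 V)) (f : V → ℝ) (ω : Config E) :
    (∑ σ : V → Bool,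
        (∏ e : {e : Sym2 V // e ∈ E}, edgeF J σ e (ω e)) *
          Real.exp (∑ v, f v * spin (σ v)))
      = rcWeight J E ω * ∏ C ∈ clusters E ω, Real.cosh (∑ v ∈ C, f v) := by
  have h1 : ∀ σ : V → Bool,
      (∏ e : {e : Sym2 V // e ∈ E}, edgeF J σ e (ω e)) *
          Real.exp (∑ v, f v * spin (σ v))
        = if compat E ω σ then
            edgeWeight J E ω * Real.exp (∑ v, f v * spin (σ v)) else 0 := by
    intro σ
    rw [prod_edgeF]
    split <;> simp
  rw [Finset.sum_congr rfl (fun σ _ => h1 σ),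
    sum_compat E ω (fun σ => edgeWeight J E ω * Real.exp (∑ v, f v * spin (σ v))),
    ← Finset.mul_sum]
  have h2 : (∑ τ : Quotient (connSetoid E ω) → Bool,
      Real.exp (∑ v, f v * spin (τ (Quotient.mk (connSetoid E ω) v))))
      = ∏ q : Quotient (connSetoid E ω),
          (2 * Real.cosh (∑ v ∈ fiber E ω q, f v)) := by
    have hsplit : ∀ τ : Quotient (connSetoid E ω) → Bool,
        (∑ v, f v * spin (τ (Quotient.mk (connSetoid E ω) v)))
          = ∑ q : Quotient (connSetoid E ω),
              (∑ v ∈ fiber E ω q, f v) * spin (τ q) := by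
      intro τ
      rw [← Finset.sum_fiberwise Finset.univ
        (fun v => Quotient.mk (connSetoid E ω) v)
        (fun v => f v * spin (τ (Quotient.mk (connSetoid E ω) v)))]
      refine Finset.sum_congr rfl fun q _ => ?_
      rw [Finset.sum_mul]
      refine Finset.sum_congr rfl fun v hv => ?_
      rw [(mem_fiber E ω q v).mp hv]
    calc (∑ τ : Quotient (connSetoid E ω) → Bool,
        Real.exp (∑ v, f v * spin (τ (Quotient.mk (connSetoid E ω) v))))
        = ∑ τ : Quotient (connSetoid E ω) → Bool,
            ∏ q : Quotient (connSetoid E ω),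
              Real.exp ((∑ v ∈ fiber E ω q, f v) * spin (τ q)) := by
          refine Finset.sum_congr rfl fun τ _ => ?_
          rw [hsplit, Real.exp_sum]
      _ = ∏ q : Quotient (connSetoid E ω),
            ∑ b : Bool, Real.exp ((∑ v ∈ fiber E ω q, f v) * spin b) := by
          rw [Finset.prod_univ_sum]
          rw [Fintype.piFinset_univ]
      _ = ∏ q : Quotient (connSetoid E ω),
            (2 * Real.cosh (∑ v ∈ fiber E ω q, f v)) := by
          refine Finset.prod_congr rfl fun q _ => ?_
          rw [Fintype.sum_bool]
          have ht : spin true = 1 := rfl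
          have hf2 : spin false = -1 := rfl
          rw [ht, hf2, mul_one, mul_neg_one, Real.cosh_eq]
          ring
  rw [h2, Finset.prod_mul_distrib, Finset.prod_const, Finset.card_univ,
    rcWeight, card_clusters, prod_clusters E ω (fun C => Real.cosh (∑ v ∈ C, f v))]
  ring

lemma keyA (J : Sym2 V → ℝ) (E : Finset (Sym2 V)) (f : V → ℝ) :
    (∑ σ : V → Bool, isingWeight J (fun _ => 0) E σ *
        Real.exp (∑ v, f v * spin (σ v)))
      = Real.exp (∑ e ∈ E, J e) *
          ∑ ω : Config E, rcWeight J E ω *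
            ∏ C ∈ clusters E ω, Real.cosh (∑ v ∈ C, f v) := by
  have step1 : ∀ σ : V → Bool,
      isingWeight J (fun _ => 0) E σ * Real.exp (∑ v, f v * spin (σ v))
        = Real.exp (∑ e ∈ E, J e) *
            ∑ ω : Config E,
              (∏ e : {e : Sym2 V // e ∈ E}, edgeF J σ e (ω e)) *
                Real.exp (∑ v, f v * spin (σ v)) := by
    intro σ
    have h0 : isingWeight J (fun _ => 0) E σ
        = Real.exp (∑ e ∈ E, J e * pairSpin σ e) := by
      simp [isingWeight]
    have h1 : Real.exp (∑ e ∈ E, J e * pairSpin σ e)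
        = Real.exp (∑ e ∈ E, J e) *
            ∑ ω : Config E, ∏ e : {e : Sym2 V // e ∈ E}, edgeF J σ e (ω e) := by
      rw [← Finset.sum_coe_sort E (fun e => J e * pairSpin σ e), Real.exp_sum,
        Finset.prod_congr rfl (fun e _ => factor_eq J σ e),
        Finset.prod_mul_distrib, ← Real.exp_sum,
        Finset.sum_coe_sort E (fun e => J e)]
      congr 1
      rw [Finset.prod_univ_sum, Fintype.piFinset_univ]
    rw [h0, h1, mul_assoc, Finset.sum_mul]
  rw [Finset.sum_congr rfl (fun σ _ => step1 σ), ← Finset.mul_sum, Finset.sum_comm]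
  congr 1
  exact Finset.sum_congr rfl fun ω _ => inner_eq J E f ω

end ESAux

/-- Edwards–Sokal moment generating function identity at zero field;
if `f ≥ 0`, both sides are at least `1`. -/
theorem edwards_sokal_mgf_identity
    {V : Type*} [Fintype V] [DecidableEq V]
    (E : Finset (Sym2 V)) (hE : ∀ e ∈ E, ¬ e.IsDiag)
    (J : Sym2 V → ℝ) (hJ : ∀ e ∈ E, 0 ≤ J e)
    (f : V → ℝ) :
    ((∑ σ : V → Bool, FK.isingProb J (fun _ => 0) E σ *
        Real.exp (∑ v, f v * FK.spin (σ v)))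
      = ∑ ωi : FK.Config E, FK.rcProb J E ωi *
          ∏ C ∈ FK.clusters E ωi, Real.cosh (∑ v ∈ C, f v)) ∧
    ((∀ v, 0 ≤ f v) →
      (1 ≤ ∑ σ : V → Bool, FK.isingProb J (fun _ => 0) E σ *
            Real.exp (∑ v, f v * FK.spin (σ v))) ∧
      (1 ≤ ∑ ωi : FK.Config E, FK.rcProb J E ωi *
            ∏ C ∈ FK.clusters E ωi, Real.cosh (∑ v ∈ C, f v))) := by
  classical
  have hne : Nonempty (V → Bool) := ⟨fun _ => true⟩
  have heS : Real.exp (∑ e ∈ E, J e) ≠ 0 := (Real.exp_pos _).ne'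
  have hZI : (0 : ℝ) < ∑ σ : V → Bool, FK.isingWeight J (fun _ => 0) E σ :=
    Finset.sum_pos (fun σ _ => Real.exp_pos _) Finset.univ_nonempty
  have h0 := ESAux.keyA J E (fun _ => 0)
  simp only [zero_mul, Finset.sum_const_zero, Real.exp_zero, mul_one,
    Real.cosh_zero, Finset.prod_const_one] at h0
  -- h0 : Z_I = exp (∑ J) * Z_RC
  have hZRC : (0 : ℝ) < ∑ ω : FK.Config E, FK.rcWeight J E ω := by
    have h1 := hZI
    rw [h0] at h1
    rcases mul_pos_iff.mp h1 with ⟨_, h⟩ | ⟨h, _⟩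
    · exact h
    · linarith [Real.exp_pos (∑ e ∈ E, J e)]
  have hEq : (∑ σ : V → Bool, FK.isingProb J (fun _ => 0) E σ *
        Real.exp (∑ v, f v * FK.spin (σ v)))
      = ∑ ωi : FK.Config E, FK.rcProb J E ωi *
          ∏ C ∈ FK.clusters E ωi, Real.cosh (∑ v ∈ C, f v) := by
    have hl : (∑ σ : V → Bool, FK.isingProb J (fun _ => 0) E σ *
          Real.exp (∑ v, f v * FK.spin (σ v)))
        = (∑ σ : V → Bool, FK.isingWeight J (fun _ => 0) E σ *
            Real.exp (∑ v, f v * FK.spin (σ v))) /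
          (∑ σ : V → Bool, FK.isingWeight J (fun _ => 0) E σ) := by
      simp only [FK.isingProb, div_mul_eq_mul_div, ← Finset.sum_div]
    have hr : (∑ ωi : FK.Config E, FK.rcProb J E ωi *
          ∏ C ∈ FK.clusters E ωi, Real.cosh (∑ v ∈ C, f v))
        = (∑ ωi : FK.Config E, FK.rcWeight J E ωi *
            ∏ C ∈ FK.clusters E ωi, Real.cosh (∑ v ∈ C, f v)) /
          (∑ ω : FK.Config E, FK.rcWeight J E ω) := by
      simp only [FK.rcProb, div_mul_eq_mul_div, ← Finset.sum_div]
    rw [hl, hr, ESAux.keyA J E f, h0, mul_div_mul_left _ _ heS]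
  refine ⟨hEq, fun _hf => ?_⟩
  have hnn : ∀ ω : FK.Config E, 0 ≤ FK.rcProb J E ω := by
    intro ω
    refine div_nonneg ?_ hZRC.le
    refine mul_nonneg (by positivity) (Finset.prod_nonneg fun e _ => ?_)
    split
    · have hle : Real.exp (-2 * J e.1) ≤ 1 := by
        rw [Real.exp_le_one_iff]
        nlinarith [hJ e.1 e.2]
      linarith
    · exact (Real.exp_pos _).le
  have hsum1 : (∑ ω : FK.Config E, FK.rcProb J E ω) = 1 := by
    simp only [FK.rcProb, ← Finset.sum_div]
    exact div_self hZRC.ne'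
  have hRHS : (1 : ℝ) ≤ ∑ ωi : FK.Config E, FK.rcProb J E ωi *
      ∏ C ∈ FK.clusters E ωi, Real.cosh (∑ v ∈ C, f v) := by
    calc (1 : ℝ) = ∑ ω : FK.Config E, FK.rcProb J E ω := hsum1.symm
      _ ≤ _ := by
          refine Finset.sum_le_sum fun ω _ => ?_
          have hp : (1 : ℝ) ≤ ∏ C ∈ FK.clusters E ω, Real.cosh (∑ v ∈ C, f v) := by
            have h := Finset.prod_le_prod (s := FK.clusters E ω)
              (f := fun _ => (1 : ℝ)) (g := fun C => Real.cosh (∑ v ∈ C, f v))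
              (fun _ _ => zero_le_one) (fun C _ => Real.one_le_cosh _)
            simpa using h
          exact le_mul_of_one_le_right (hnn ω) hp
  exact ⟨by rw [hEq]; exact hRHS, hRHS⟩
end
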